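/- There exist a finite stimulus set S with prior p, a finite product response set 𝓡, and two conditional distributions P₁(r|s) and P₂(r|s) on 𝓡 such that: for each i ∈ {1,2}, the set 𝒬_i of row-stochastic matrices Q satisfying ∑_r P_i(r|s)Q(r̃|r) = P_i^ni(r̃|s) for all s with p(s) > 0 and all r̃ is nonempty; and yet 𝒬₁ ∩ 𝒬₂ = ∅. (The transition probabilities of stochastic codes that ignore noise correlations may depend on the marginal likelihoods: no single transition matrix works across distributions with different marginals; first part of the theorem on dependence of Q(R^ni|R).) -/

import Mathlib

open scoped BigOperators

/-- First coordinate marginal of a conditional distribution on a product. -/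
noncomputable def marg1 {S A B : Type*} [Fintype B]
    (P : S → A × B → ℝ) (s : S) (a : A) : ℝ := ∑ b, P s (a, b)

/-- Second coordinate marginal of a conditional distribution on a product. -/
noncomputable def marg2 {S A B : Type*} [Fintype A]
    (P : S → A × B → ℝ) (s : S) (b : B) : ℝ := ∑ a, P s (a, b)

/-- Noise-independent surrogate `P^ni(r₁,r₂|s) = P₁(r₁|s) P₂(r₂|s)`. -/
noncomputable def pNI2 {S A B : Type*} [Fintype A] [Fintype B]
    (P : S → A × B → ℝ) (s : S) (r : A × B) : ℝ :=
  marg1 P s r.1 * marg2 P s r.2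

/-- `Q` is a feasible transition matrix of a stochastic code mapping `P` onto its
noise-independent surrogate: it is row stochastic and
`∑_r P(r|s) Q(r̃|r) = P^ni(r̃|s)` for every `s` with `p s > 0` and every `r̃`. -/
def feasibleNI {S A B : Type*} [Fintype A] [Fintype B]
    (p : S → ℝ) (P : S → A × B → ℝ) (Q : A × B → A × B → ℝ) : Prop :=
  (∀ r rt, 0 ≤ Q r rt) ∧ (∀ r, ∑ rt, Q r rt = 1) ∧
  (∀ s, 0 < p s → ∀ rt, (∑ r, P s r * Q r rt) = pNI2 P s rt)

/-- There are a prior `p` and two conditional distributions `P₁`,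
`P₂` on a finite product response set such that each admits a feasible stochastic
code onto its noise-independent surrogate, yet no single transition matrix is
feasible for both: the transition probabilities depend on the marginal
likelihoods. -/
theorem decorrelating_stochastic_code_depends_on_marginals :
    ∃ (nS nA nB : ℕ) (p : Fin nS → ℝ)
      (P₁ P₂ : Fin nS → Fin nA × Fin nB → ℝ),
      (∀ s, 0 ≤ p s) ∧ (∑ s, p s = 1) ∧
      (∀ s r, 0 ≤ P₁ s r) ∧ (∀ s, ∑ r, P₁ s r = 1) ∧
      (∀ s r, 0 ≤ P₂ s r) ∧ (∀ s, ∑ r, P₂ s r = 1) ∧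
      (∃ Q, feasibleNI p P₁ Q) ∧ (∃ Q, feasibleNI p P₂ Q) ∧
      ¬ ∃ Q, feasibleNI p P₁ Q ∧ feasibleNI p P₂ Q := by
  refine ⟨1, 2, 2, fun _ => 1,
    fun _ r => if r.1 = r.2 then 1/2 else 0,
    fun _ r => if r = (0, 0) then 1 else 0,
    fun _ => by norm_num, by simp, ?_, ?_, ?_, ?_, ?_, ?_, ?_⟩
  · intro s r; dsimp only; split <;> norm_num
  · intro s
    rw [Fintype.sum_prod_type]
    simp [Fin.sum_univ_two]
  · intro s r; dsimp only; split <;> norm_num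
  · intro s
    rw [Fintype.sum_prod_type]
    simp [Fin.sum_univ_two, Prod.ext_iff]
    decide
  · refine ⟨fun _ _ => 1/4, fun _ _ => by norm_num, ?_, ?_⟩
    · intro r
      rw [Fintype.sum_prod_type]
      simp [Fin.sum_univ_two]
      norm_num
    · intro s _ rt
      simp only [pNI2, marg1, marg2]
      rw [Fintype.sum_prod_type]
      fin_cases rt <;>
        simp [Fin.sum_univ_two] <;> norm_num
  · refine ⟨fun _ rt => if rt = (0, 0) then 1 else 0,
      fun _ rt => by dsimp only; split <;> norm_num, ?_, ?_⟩
    · intro r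
      rw [Fintype.sum_prod_type]
      simp [Fin.sum_univ_two, Prod.ext_iff]
      decide
    · intro s _ rt
      simp only [pNI2, marg1, marg2]
      rw [Fintype.sum_prod_type]
      fin_cases rt <;>
        simp [Fin.sum_univ_two, Prod.ext_iff] <;> decide
  · rintro ⟨Q, ⟨hQ0, _, h1⟩, ⟨_, _, h2⟩⟩
    have e2 := h2 0 (by norm_num) (0, 0)
    have e1 := h1 0 (by norm_num) (0, 0)
    rw [Fintype.sum_prod_type] at e2 e1
    simp only [pNI2, marg1, marg2] at e2 e1
    simp [Fin.sum_univ_two, Prod.ext_iff] at e2 e1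
    have h0 : (0:ℝ) ≤ Q (1, 1) (0, 0) := hQ0 (1, 1) (0, 0)
    linarith
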